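/- Let $(X_1, C_1, u_1)$ and $(X_2, C_2, u_2)$ be order unit spaces with strictly positive states $\varphi_1, \varphi_2$ and cross sections $\Sigma_i = \{x \in C_i^\circ : \varphi_i(x) = 1\}$. Let $x, y \in \Sigma_1$ be distinct and let $x', y'$ in the relative boundary of $\Sigma_1$ be the endpoints of $\ell_{xy} \cap \Sigma_1$ with $x$ between $x'$ and $y$, and $y$ between $y'$ and $x$. Suppose $f : (\Sigma_1, d_H) \to (\Sigma_2, d_H)$ is an isometry that maps line segments to line segments, and let $f(x)', f(y)'$ be the endpoints of $\ell_{f(x) f(y)} \cap \Sigma_2$ with $f(x)$ between $f(x)'$ and $f(y)$, and $f(y)$ between $f(y)'$ and $f(x)$. Then there exists a linear map $S : \mathrm{Span}\{x', y'\} \to \mathrm{Span}\{f(x)', f(y)'\}$ such that $Sx' / \varphi_2(Sx') = f(x)'$, $Sy' / \varphi_2(Sy') = f(y)'$, $Sz / \varphi_2(Sz) = f(z)$ for all $z$ in the open segment $(x', y')$, and $S$ is bi-positive with respect to the cones $C_1 \cap \mathrm{Span}\{x', y'\}$ and $C_2 \cap \mathrm{Span}\{f(x)', f(y)'\}$. 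-/

import Mathlib

namespace HilbertGeom

/-- An order unit space: a real vector space with an Archimedean cone `C` and order unit `u`. -/
structure OrderUnitSpace (X : Type*) [AddCommGroup X] [Module ℝ X] where
  C : Set X
  u : X
  convex : Convex ℝ C
  smul_mem : ∀ ⦃c : ℝ⦄, 0 ≤ c → ∀ ⦃x : X⦄, x ∈ C → c • x ∈ C
  salient : ∀ ⦃x : X⦄, x ∈ C → -x ∈ C → x = 0
  archimedean : ∀ x y : X, y ∈ C → (∀ n : ℕ, 0 < n → y - (n : ℝ) • x ∈ C) → -x ∈ C
  u_mem : u ∈ C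
  orderUnit : ∀ x : X, ∃ c : ℝ, 0 < c ∧ c • u - x ∈ C

namespace OrderUnitSpace

variable {X : Type*} [AddCommGroup X] [Module ℝ X] (S : OrderUnitSpace X)

/-- The order unit norm `‖x‖_u = inf {c > 0 : -c•u ≤ x ≤ c•u}`. -/
noncomputable def onorm (x : X) : ℝ :=
  sInf {c : ℝ | 0 < c ∧ c • S.u - x ∈ S.C ∧ c • S.u + x ∈ S.C}

/-- The interior of the cone `C` with respect to the order unit norm. -/
def interiorC : Set X :=
  {x : X | ∃ ε > 0, ∀ y : X, S.onorm (y - x) < ε → y ∈ S.C}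

/-- `M(x/y) = inf {β > 0 : x ≤_C β y}`. -/
noncomputable def M (x y : X) : ℝ := sInf {c : ℝ | 0 < c ∧ c • y - x ∈ S.C}

/-- Birkhoff's version of Hilbert's metric. -/
noncomputable def dH (x y : X) : ℝ := Real.log (S.M x y * S.M y x)

/-- `φ` is a state: a linear functional with `φ u = 1`. -/
def IsState (φ : X →ₗ[ℝ] ℝ) : Prop := φ S.u = 1

/-- `φ` is strictly positive: `φ(C \ {0}) ⊆ (0, ∞)`. -/
def StrictlyPos (φ : X →ₗ[ℝ] ℝ) : Prop := ∀ x ∈ S.C, x ≠ 0 → 0 < φ x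

/-- The cross section `Σ_φ = {x ∈ C° : φ x = 1}`. -/
def Sig (φ : X →ₗ[ℝ] ℝ) : Set X := {x | x ∈ S.interiorC ∧ φ x = 1}

/-- `z` lies in the closure of `A` with respect to the order unit norm. -/
def InClosure (A : Set X) (z : X) : Prop := ∀ ε > 0, ∃ w ∈ A, S.onorm (w - z) < ε

/-- The relative boundary of `Σ_φ` (in the affine hyperplane `φ = 1`, w.r.t. the order
unit norm): since `Σ_φ` is relatively open this is its closure minus itself. -/
def relBoundary (φ : X →ₗ[ℝ] ℝ) : Set X :=
  {z : X | S.InClosure (S.Sig φ) z ∧ z ∉ S.Sig φ}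

/-- The straight line through `x` and `y`. -/
def lineThrough (x y : X) : Set X := {z : X | ∃ t : ℝ, z = x + t • (y - x)}

end OrderUnitSpace

end HilbertGeom

namespace HilbertGeom
namespace OrderUnitSpace

variable {X : Type*} [AddCommGroup X] [Module ℝ X] (S : OrderUnitSpace X)

lemma add_mem {a b : X} (ha : a ∈ S.C) (hb : b ∈ S.C) : a + b ∈ S.C := by
  have h := S.convex ha hb (by norm_num : (0:ℝ) ≤ 1/2) (by norm_num : (0:ℝ) ≤ 1/2) (by norm_num)
  have h2 := S.smul_mem (by norm_num : (0:ℝ) ≤ 2) h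
  have : (2:ℝ) • ((1/2:ℝ) • a + (1/2:ℝ) • b) = a + b := by
    rw [smul_add, smul_smul, smul_smul]; norm_num
  rwa [this] at h2

/-- The defining set of `onorm` -/
lemma onormSet_nonempty (v : X) :
    ∃ c : ℝ, 0 < c ∧ c • S.u - v ∈ S.C ∧ c • S.u + v ∈ S.C := by
  obtain ⟨c₁, hc₁, h₁⟩ := S.orderUnit v
  obtain ⟨c₂, hc₂, h₂⟩ := S.orderUnit (-v)
  refine ⟨c₁ + c₂, by linarith, ?_, ?_⟩
  · have := S.add_mem h₁ (S.smul_mem hc₂.le S.u_mem)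
    have e : c₁ • S.u - v + c₂ • S.u = (c₁ + c₂) • S.u - v := by
      rw [add_smul]; abel
    rwa [e] at this
  · have := S.add_mem h₂ (S.smul_mem hc₁.le S.u_mem)
    have e : c₂ • S.u - -v + c₁ • S.u = (c₁ + c₂) • S.u + v := by
      rw [add_smul]; abel
    rwa [e] at this

lemma onorm_bddBelow (v : X) :
    BddBelow {c : ℝ | 0 < c ∧ c • S.u - v ∈ S.C ∧ c • S.u + v ∈ S.C} :=
  ⟨0, fun c hc => hc.1.le⟩

lemma mem_of_onorm_lt {v : X} {ε : ℝ} (h : S.onorm v < ε) :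
    ε • S.u - v ∈ S.C ∧ ε • S.u + v ∈ S.C := by
  obtain ⟨c, hc, hcε⟩ := exists_lt_of_csInf_lt
    (by obtain ⟨c, h1, h2, h3⟩ := S.onormSet_nonempty v; exact ⟨c, h1, h2, h3⟩) h
  obtain ⟨hc0, h1, h2⟩ := hc
  constructor
  · have := S.add_mem h1 (S.smul_mem (by linarith : (0:ℝ) ≤ ε - c) S.u_mem)
    have e : c • S.u - v + (ε - c) • S.u = ε • S.u - v := by
      rw [sub_smul]; abel
    rwa [e] at this
  · have := S.add_mem h2 (S.smul_mem (by linarith : (0:ℝ) ≤ ε - c) S.u_mem)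
    have e : c • S.u + v + (ε - c) • S.u = ε • S.u + v := by
      rw [sub_smul]; abel
    rwa [e] at this

/-- Archimedean cones are closed. -/
lemma mem_C_of_approx {z : X} (h : ∀ ε > 0, ∃ w ∈ S.C, S.onorm (w - z) < ε) :
    z ∈ S.C := by
  have key : ∀ ε : ℝ, 0 < ε → z + ε • S.u ∈ S.C := by
    intro ε hε
    obtain ⟨w, hw, hwz⟩ := h ε hε
    have h2 := (S.mem_of_onorm_lt hwz).1
    have := S.add_mem hw h2
    have e : w + (ε • S.u - (w - z)) = z + ε • S.u := by abel
    rwa [e] at this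
  have harch := S.archimedean (-z) S.u S.u_mem (fun n hn => by
    have hn' : (0:ℝ) < (n:ℝ) := by exact_mod_cast hn
    have := S.smul_mem hn'.le (key ((n:ℝ)⁻¹) (by positivity))
    have e : (n:ℝ) • (z + ((n:ℝ))⁻¹ • S.u) = S.u - (n:ℝ) • (-z) := by
      rw [smul_add, smul_smul, mul_inv_cancel₀ (ne_of_gt hn'), one_smul, smul_neg]
      abel
    rwa [e] at this)
  rwa [neg_neg] at harch

lemma pos_apply_nonneg {φ : X →ₗ[ℝ] ℝ} (hpos : S.StrictlyPos φ) {v : X} (hv : v ∈ S.C) :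
    0 ≤ φ v := by
  by_cases h : v = 0
  · simp [h]
  · exact (hpos v hv h).le

lemma abs_apply_le {φ : X →ₗ[ℝ] ℝ} (hstate : S.IsState φ) (hpos : S.StrictlyPos φ)
    {v : X} {ε : ℝ} (h : S.onorm v < ε) : |φ v| ≤ ε := by
  obtain ⟨h1, h2⟩ := S.mem_of_onorm_lt h
  have e1 := S.pos_apply_nonneg hpos h1
  have e2 := S.pos_apply_nonneg hpos h2
  have hu : φ S.u = 1 := hstate
  simp only [map_sub, map_add, map_smul, hu, smul_eq_mul, mul_one] at e1 e2
  rw [abs_le]; constructor <;> linarith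

lemma onorm_smul_le {r : ℝ} (hr : 0 < r) (v : X) : S.onorm (r • v) ≤ r * S.onorm v := by
  have h : ∀ c ∈ {c : ℝ | 0 < c ∧ c • S.u - v ∈ S.C ∧ c • S.u + v ∈ S.C},
      S.onorm (r • v) ≤ r * c := by
    intro c ⟨hc0, h1, h2⟩
    apply csInf_le (S.onorm_bddBelow _)
    refine ⟨by positivity, ?_, ?_⟩
    · have := S.smul_mem hr.le h1
      have e : r • (c • S.u - v) = (r * c) • S.u - r • v := by
        rw [smul_sub, smul_smul]
      rwa [e] at this
    · have := S.smul_mem hr.le h2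
      have e : r • (c • S.u + v) = (r * c) • S.u + r • v := by
        rw [smul_add, smul_smul]
      rwa [e] at this
  have hne := S.onormSet_nonempty v
  have h2 : S.onorm (r • v) / r ≤ S.onorm v := by
    apply le_csInf hne
    intro c hc
    rw [div_le_iff₀ hr, mul_comm]
    exact h c hc
  rw [div_le_iff₀ hr] at h2
  linarith [h2]

end OrderUnitSpace
end HilbertGeom
namespace HilbertGeom
namespace OrderUnitSpace

variable {X : Type*} [AddCommGroup X] [Module ℝ X] (S : OrderUnitSpace X)

lemma interiorC_subset_C : S.interiorC ⊆ S.C := by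
  rintro x ⟨ε, hε, hball⟩
  apply hball
  have h0 : S.onorm (x - x) ≤ ε/2 := by
    rw [sub_self]
    apply csInf_le (S.onorm_bddBelow _)
    refine ⟨by positivity, ?_, ?_⟩ <;>
      simpa using S.smul_mem (by positivity : (0:ℝ) ≤ ε/2) S.u_mem
  linarith

/-- points between an interior point and a point of the cone are interior. -/
lemma interior_segment {a c : X} (ha : a ∈ S.interiorC) (hc : c ∈ S.C)
    {t : ℝ} (ht : t ∈ Set.Ioo (0:ℝ) 1) : t • a + (1 - t) • c ∈ S.interiorC := by
  obtain ⟨ε, hε, hball⟩ := ha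
  obtain ⟨ht0, ht1⟩ := ht
  refine ⟨t * ε, by positivity, ?_⟩
  intro p hp
  set b := t • a + (1 - t) • c with hb
  have hq : t⁻¹ • (p - (1 - t) • c) ∈ S.C := by
    apply hball
    have e : t⁻¹ • (p - (1 - t) • c) - a = t⁻¹ • (p - b) := by
      rw [hb, smul_sub, smul_sub, smul_add, smul_smul, smul_smul,
        inv_mul_cancel₀ (ne_of_gt ht0), one_smul]
      abel
    rw [e]
    calc S.onorm (t⁻¹ • (p - b)) ≤ t⁻¹ * S.onorm (p - b) := S.onorm_smul_le (by positivity) _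
    _ < t⁻¹ * (t * ε) := by
        apply mul_lt_mul_of_pos_left hp (by positivity)
    _ = ε := by field_simp
  have := S.convex (a := t) (b := 1 - t) hq hc ht0.le (by linarith) (by ring)
  have e2 : t • (t⁻¹ • (p - (1 - t) • c)) + (1 - t) • c = p := by
    rw [smul_smul, mul_inv_cancel₀ (ne_of_gt ht0), one_smul]; abel
  rwa [e2] at this

lemma relBoundary_mem_C {φ : X →ₗ[ℝ] ℝ} {z : X} (hz : z ∈ S.relBoundary φ) : z ∈ S.C := by
  apply S.mem_C_of_approx
  intro ε hε
  obtain ⟨w, hw, hwz⟩ := hz.1 ε hε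
  exact ⟨w, S.interiorC_subset_C hw.1, hwz⟩

lemma relBoundary_phi {φ : X →ₗ[ℝ] ℝ} (hstate : S.IsState φ) (hpos : S.StrictlyPos φ)
    {z : X} (hz : z ∈ S.relBoundary φ) : φ z = 1 := by
  have key : ∀ ε : ℝ, 0 < ε → |φ z - 1| ≤ ε := by
    intro ε hε
    obtain ⟨w, hw, hwz⟩ := hz.1 ε hε
    have := S.abs_apply_le hstate hpos hwz
    rw [map_sub] at this
    rw [← hw.2]
    rw [abs_sub_comm]
    exact this
  by_contra h
  have h2 : 0 < |φ z - 1| := abs_pos.mpr (sub_ne_zero.mpr h)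
  linarith [key (|φ z - 1|/2) (by linarith)]

lemma M_self {p : X} (hp : p ∈ S.C) (hp0 : p ≠ 0) : S.M p p = 1 := by
  have hset : {c : ℝ | 0 < c ∧ c • p - p ∈ S.C} = Set.Ici 1 := by
    ext c
    simp only [Set.mem_setOf_eq, Set.mem_Ici]
    constructor
    · rintro ⟨hc0, hc⟩
      by_contra h
      push_neg at h
      have h1 : (1 - c) • p ∈ S.C := S.smul_mem (by linarith) hp
      have h2 : -((1 - c) • p) ∈ S.C := by
        have e : -((1 - c) • p) = c • p - p := by
          rw [sub_smul, one_smul]; abel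
        rwa [e]
      have := S.salient h1 h2
      rw [smul_eq_zero] at this
      rcases this with h' | h'
      · linarith
      · exact hp0 h'
    · intro h
      refine ⟨by linarith, ?_⟩
      have e : c • p - p = (c - 1) • p := by rw [sub_smul, one_smul]
      rw [e]
      exact S.smul_mem (by linarith) hp
  rw [M, hset, csInf_Ici]

lemma dH_self {p : X} (hp : p ∈ S.C) (hp0 : p ≠ 0) : S.dH p p = 0 := by
  rw [dH, S.M_self hp hp0, mul_one, Real.log_one]

end OrderUnitSpace
end HilbertGeom
namespace HilbertGeom
open OrderUnitSpace

section Aff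
variable {X : Type*} [AddCommGroup X] [Module ℝ X]

/-- Affine parametrization of the line through `a` and `b`. -/
def aff (a b : X) (t : ℝ) : X := (1 - t) • a + t • b

lemma aff_zero (a b : X) : aff a b 0 = a := by simp [aff]

lemma aff_one (a b : X) : aff a b 1 = b := by simp [aff]

lemma aff_comb (a b : X) {s t : ℝ} (h : s + t = 1) (p q : ℝ) :
    s • aff a b p + t • aff a b q = aff a b (s * p + t * q) := by
  have hs : s = 1 - t := by linarith
  subst hs
  simp only [aff, smul_add, smul_smul]
  module

lemma aff_inj {a b : X} (hab : a ≠ b) {p q : ℝ} (h : aff a b p = aff a b q) : p = q := by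
  have e : (q - p) • (a - b) = 0 := by
    simp only [aff] at h
    have : (1 - p) • a + p • b - ((1 - q) • a + q • b) = (q - p) • (a - b) := by module
    rw [← this, h]; abel
  rcases smul_eq_zero.mp e with h' | h'
  · linarith [sub_eq_zero.mp (by linarith [h'] : q - p = 0)]
  · exact absurd (sub_eq_zero.mp h') hab

lemma aff_mem_lineThrough (a b : X) (t : ℝ) : aff a b t ∈ lineThrough a b := by
  refine ⟨t, ?_⟩
  simp only [aff]; module

lemma combo_mem_lineThrough (a b : X) {s t : ℝ} (h : s + t = 1) :
    s • a + t • b ∈ lineThrough a b := by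
  have : s • a + t • b = aff a b t := by
    have hs : s = 1 - t := by linarith
    subst hs; rfl
  rw [this]; exact aff_mem_lineThrough a b t

lemma mem_lineThrough_symm {a b z : X} (h : z ∈ lineThrough a b) : z ∈ lineThrough b a := by
  obtain ⟨t, ht⟩ := h
  refine ⟨1 - t, ?_⟩
  rw [ht]; module

/-- Solve an affine relation: if `p = s•d + t•c` with `s+t=1`, `t ≠ 0`, then
`c` is on the line through `p` and `d`. -/
lemma solve_line {p d c : X} {s t : ℝ} (hst : s + t = 1) (ht : t ≠ 0)
    (h : p = s • d + t • c) : c ∈ lineThrough p d := by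
  have hc : c = t⁻¹ • p + (-(s/t)) • d := by
    have : t • c = p - s • d := by rw [h]; abel
    calc c = t⁻¹ • (t • c) := by rw [smul_smul, inv_mul_cancel₀ ht, one_smul]
    _ = t⁻¹ • (p - s • d) := by rw [this]
    _ = t⁻¹ • p + (-(s/t)) • d := by
        rw [smul_sub, sub_eq_add_neg, ← neg_smul, smul_smul]
        congr 2
        field_simp
  rw [hc]
  exact combo_mem_lineThrough p d (by field_simp; linarith)

end Aff

/-- The logit function. -/
noncomputable def Lam (r : ℝ) : ℝ := Real.log (r / (1 - r))

/-- The logistic function, inverse of `Lam`. -/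
noncomputable def Linv (p : ℝ) : ℝ := Real.exp p / (1 + Real.exp p)

lemma Linv_mem (p : ℝ) : Linv p ∈ Set.Ioo (0:ℝ) 1 := by
  have h := Real.exp_pos p
  constructor
  · rw [Linv]; positivity
  · rw [Linv, div_lt_one (by positivity)]; linarith

lemma Lam_Linv (p : ℝ) : Lam (Linv p) = p := by
  have h := Real.exp_pos p
  have h1 : (0:ℝ) < 1 + Real.exp p := by positivity
  rw [Lam, Linv]
  rw [show Real.exp p / (1 + Real.exp p) / (1 - Real.exp p / (1 + Real.exp p))
      = Real.exp p by field_simp; ring]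
  exact Real.log_exp p

lemma Linv_Lam {s : ℝ} (hs : s ∈ Set.Ioo (0:ℝ) 1) : Linv (Lam s) = s := by
  obtain ⟨h0, h1⟩ := hs
  have h2 : (0:ℝ) < 1 - s := by linarith
  have he : Real.exp (Lam s) = s / (1 - s) := Real.exp_log (by positivity)
  rw [Linv, he]
  field_simp
  ring

lemma Lam_lt_Lam {s t : ℝ} (hs : 0 < s) (ht : t < 1) (hst : s < t) : Lam s < Lam t := by
  have h1 : (0:ℝ) < 1 - t := by linarith
  have h2 : (0:ℝ) < 1 - s := by linarith
  apply Real.log_lt_log (by positivity)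
  rw [div_lt_div_iff₀ h2 h1]
  nlinarith

lemma Lam_le_Lam {s t : ℝ} (hs : 0 < s) (ht : t < 1) (hst : s ≤ t) : Lam s ≤ Lam t := by
  rcases eq_or_lt_of_le hst with h | h
  · subst h; rfl
  · exact (Lam_lt_Lam hs ht h).le

/-- An isometry of the real line respecting an orientation pair is a translation. -/
lemma real_isometry {μ : ℝ → ℝ} (h : ∀ p q : ℝ, |μ p - μ q| = |p - q|) {p₁ q₁ : ℝ}
    (h1 : p₁ < q₁) (h2 : μ p₁ < μ q₁) : ∀ p, μ p = p + (μ p₁ - p₁) := by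
  set ν : ℝ → ℝ := fun p => μ (p + p₁) - μ p₁ with hν
  have hsq : ∀ p q : ℝ, (ν p - ν q)^2 = (p - q)^2 := by
    intro p q
    have := h (p + p₁) (q + p₁)
    have e : p + p₁ - (q + p₁) = p - q := by ring
    rw [e] at this
    have e2 : ν p - ν q = μ (p + p₁) - μ (q + p₁) := by simp only [hν]; ring
    rw [e2, ← sq_abs, this, sq_abs]
  have hν0 : ν 0 = 0 := by simp [hν]
  have hνp : ∀ p : ℝ, (ν p)^2 = p^2 := by
    intro p
    have := hsq p 0
    simpa [hν0] using this
  have hprod : ∀ p q : ℝ, ν p * ν q = p * q := by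
    intro p q
    linear_combination (hνp p + hνp q - hsq p q) / 2
  set d := q₁ - p₁ with hd
  have hd0 : 0 < d := by simp [hd]; linarith
  have hνd : ν d = d := by
    have e : ν d = μ q₁ - μ p₁ := by simp [hν, hd]
    have habs : |μ q₁ - μ p₁| = |q₁ - p₁| := h q₁ p₁
    rw [abs_of_pos (by linarith), abs_of_pos (by linarith)] at habs
    rw [e, habs]
  have hid : ∀ p : ℝ, ν p = p := by
    intro p
    have := hprod p d
    rw [hνd] at this
    exact mul_right_cancel₀ (ne_of_gt hd0) this
  intro p
  have := hid (p - p₁)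
  simp only [hν, sub_add_cancel] at this
  linarith

end HilbertGeom
namespace HilbertGeom
namespace OrderUnitSpace

variable {X : Type*} [AddCommGroup X] [Module ℝ X] (S : OrderUnitSpace X)

/-- The part of the cone inside the span of two opposite boundary points of a chord
is exactly the positive quadrant. -/
lemma quadrant {φ : X →ₗ[ℝ] ℝ} (hstate : S.IsState φ) (hpos : S.StrictlyPos φ)
    {a b x₀ : X} {s₀ : ℝ}
    (ha : a ∈ S.C) (hb : b ∈ S.C) (hpa : φ a = 1) (hpb : φ b = 1)
    (hna : a ∉ S.Sig φ) (hnb : b ∉ S.Sig φ)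
    (hx₀ : x₀ ∈ S.interiorC) (hs₀ : s₀ ∈ Set.Ioo (0:ℝ) 1) (hx₀e : x₀ = aff a b s₀) :
    ∀ α β : ℝ, α • a + β • b ∈ S.C ↔ 0 ≤ α ∧ 0 ≤ β := by
  have hab : a ≠ b := by
    intro h
    apply hna
    refine ⟨?_, hpa⟩
    have : x₀ = a := by rw [hx₀e, h, aff]; module
    rwa [this] at hx₀
  intro α β
  constructor
  · intro hv
    by_cases hv0 : α • a + β • b = 0
    · have hφ : α + β = 0 := by
        have := congrArg φ hv0
        simpa [map_add, map_smul, hpa, hpb] using this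
      have : α • (a - b) = 0 := by
        have e : α • (a - b) = α • a + β • b := by
          rw [smul_sub]
          rw [show β = -α by linarith]
          module
        rw [e, hv0]
      rcases smul_eq_zero.mp this with h' | h'
      · constructor <;> [exact le_of_eq h'.symm; exact le_of_eq (by linarith)]
      · exact absurd (sub_eq_zero.mp h') hab
    · have hσ : 0 < α + β := by
        have := hpos _ hv hv0
        simpa [map_add, map_smul, hpa, hpb] using this
      set σ := α + β with hσdef
      have hw : (σ⁻¹ * β) • b + (σ⁻¹ * α) • a ∈ S.C := by
        have := S.smul_mem (inv_nonneg.mpr hσ.le) hv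
        rw [smul_add, smul_smul, smul_smul] at this
        rw [add_comm]
        exact this
      set ρ := σ⁻¹ * β with hρ
      have hwaff : aff a b ρ ∈ S.C := by
        have e : aff a b ρ = (σ⁻¹ * β) • b + (σ⁻¹ * α) • a := by
          rw [aff, hρ, add_comm]
          congr 2
          have : σ⁻¹ * α = 1 - σ⁻¹ * β := by
            field_simp
            linarith
          rw [this]
        rw [e]
        exact hw
      -- key sub-lemma: no negative coefficient is possible
      have hkey : ∀ ρ' : ℝ, aff a b ρ' ∈ S.C → (ρ' < 0 → False) ∧ (1 < ρ' → False) := by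
        intro ρ' hwC
        constructor
        · intro hρneg
          apply hna
          refine ⟨?_, hpa⟩
          set t := (-ρ') / (s₀ - ρ') with htdef
          have hden : 0 < s₀ - ρ' := by have := hs₀.1; linarith
          have ht : t ∈ Set.Ioo (0:ℝ) 1 := by
            constructor
            · apply div_pos (by linarith) hden
            · rw [div_lt_one hden]; linarith [hs₀.1]
          have e2 : a = t • x₀ + (1 - t) • aff a b ρ' := by
            rw [hx₀e, aff_comb a b (by ring : t + (1 - t) = 1)]
            rw [show t * s₀ + (1 - t) * ρ' = 0 by
              have : t * (s₀ - ρ') = -ρ' := by rw [htdef]; exact div_mul_cancel₀ _ (ne_of_gt hden)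
              linear_combination this]
            exact (aff_zero a b).symm
          rw [e2]
          exact S.interior_segment hx₀ hwC ht
        · intro hρbig
          apply hnb
          refine ⟨?_, hpb⟩
          set t := (1 - s₀) / (ρ' - s₀) with htdef
          have hden : 0 < ρ' - s₀ := by have := hs₀.2; linarith
          have ht : t ∈ Set.Ioo (0:ℝ) 1 := by
            constructor
            · apply div_pos (by linarith [hs₀.2]) hden
            · rw [div_lt_one hden]; linarith
          have ht' : 1 - t ∈ Set.Ioo (0:ℝ) 1 := by
            constructor <;> [linarith [ht.2]; linarith [ht.1]]
          have e2 : b = (1 - t) • x₀ + (1 - (1 - t)) • aff a b ρ' := by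
            rw [hx₀e, aff_comb a b (by ring : (1 - t) + (1 - (1 - t)) = 1)]
            rw [show (1 - t) * s₀ + (1 - (1 - t)) * ρ' = 1 by
              have : t * (ρ' - s₀) = 1 - s₀ := by rw [htdef]; exact div_mul_cancel₀ _ (ne_of_gt hden)
              linear_combination this]
            exact (aff_one a b).symm
          rw [e2]
          exact S.interior_segment hx₀ hwC ht'
      have hβ : 0 ≤ β := by
        by_contra hβneg
        push_neg at hβneg
        exact (hkey ρ hwaff).1 (by rw [hρ]; exact mul_neg_of_pos_of_neg (by positivity) hβneg) 
      have hα : 0 ≤ α := by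
        by_contra hαneg
        push_neg at hαneg
        apply (hkey ρ hwaff).2
        rw [hρ]
        rw [show (1:ℝ) = σ⁻¹ * σ by rw [inv_mul_cancel₀ (ne_of_gt hσ)]]
        apply mul_lt_mul_of_pos_left _ (by positivity)
        rw [hσdef]
        linarith
      exact ⟨hα, hβ⟩
  · rintro ⟨hα, hβ⟩
    exact S.add_mem (S.smul_mem hα ha) (S.smul_mem hβ hb)

end OrderUnitSpace
end HilbertGeom
namespace HilbertGeom
namespace OrderUnitSpace

variable {X : Type*} [AddCommGroup X] [Module ℝ X] (S : OrderUnitSpace X)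

lemma M_aff {a b : X} (hquad : ∀ α β : ℝ, α • a + β • b ∈ S.C ↔ 0 ≤ α ∧ 0 ≤ β)
    {s t : ℝ} (hs : s ∈ Set.Ioo (0:ℝ) 1) (ht : t ∈ Set.Ioo (0:ℝ) 1) :
    S.M (aff a b s) (aff a b t) = max ((1 - s) / (1 - t)) (s / t) := by
  obtain ⟨hs0, hs1⟩ := hs
  obtain ⟨ht0, ht1⟩ := ht
  have h1t : (0:ℝ) < 1 - t := by linarith
  have h1s : (0:ℝ) < 1 - s := by linarith
  have hm : 0 < max ((1 - s) / (1 - t)) (s / t) :=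
    lt_max_of_lt_right (by positivity)
  have e : ∀ c : ℝ, c • aff a b t - aff a b s
      = (c * (1 - t) - (1 - s)) • a + (c * t - s) • b := by
    intro c
    simp only [aff, smul_add, smul_smul]
    module
  have hset : {c : ℝ | 0 < c ∧ c • aff a b t - aff a b s ∈ S.C}
      = Set.Ici (max ((1 - s) / (1 - t)) (s / t)) := by
    ext c
    simp only [Set.mem_setOf_eq, Set.mem_Ici, e c, hquad]
    constructor
    · rintro ⟨_, h1, h2⟩
      apply max_le
      · rw [div_le_iff₀ h1t]; linarith
      · rw [div_le_iff₀ ht0]; linarith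
    · intro h
      have ha1 : (1 - s) / (1 - t) ≤ c := le_trans (le_max_left _ _) h
      have ha2 : s / t ≤ c := le_trans (le_max_right _ _) h
      rw [div_le_iff₀ h1t] at ha1
      rw [div_le_iff₀ ht0] at ha2
      exact ⟨lt_of_lt_of_le hm h, by linarith, by linarith⟩
  rw [M, hset, csInf_Ici]

lemma dH_aff {a b : X} (hquad : ∀ α β : ℝ, α • a + β • b ∈ S.C ↔ 0 ≤ α ∧ 0 ≤ β)
    {s t : ℝ} (hs : s ∈ Set.Ioo (0:ℝ) 1) (ht : t ∈ Set.Ioo (0:ℝ) 1) :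
    S.dH (aff a b s) (aff a b t) = |Lam s - Lam t| := by
  -- prove it first for s ≤ t, then conclude by symmetry
  have key : ∀ s t : ℝ, s ∈ Set.Ioo (0:ℝ) 1 → t ∈ Set.Ioo (0:ℝ) 1 → s ≤ t →
      S.dH (aff a b s) (aff a b t) = |Lam s - Lam t| := by
    clear hs ht s t
    intro s t hs ht hst
    obtain ⟨hs0, hs1⟩ := hs
    obtain ⟨ht0, ht1⟩ := ht
    have h1t : (0:ℝ) < 1 - t := by linarith
    have h1s : (0:ℝ) < 1 - s := by linarith
    rw [dH, S.M_aff hquad ⟨hs0, hs1⟩ ⟨ht0, ht1⟩, S.M_aff hquad ⟨ht0, ht1⟩ ⟨hs0, hs1⟩]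
    have hmax1 : max ((1 - s) / (1 - t)) (s / t) = (1 - s) / (1 - t) := by
      apply max_eq_left
      rw [div_le_div_iff₀ ht0 h1t]
      nlinarith
    have hmax2 : max ((1 - t) / (1 - s)) (t / s) = t / s := by
      apply max_eq_right
      rw [div_le_div_iff₀ h1s hs0]
      nlinarith
    rw [hmax1, hmax2]
    have hprod : (1 - s) / (1 - t) * (t / s) = (t / (1 - t)) / (s / (1 - s)) := by
      field_simp
    rw [hprod, Real.log_div (by positivity) (by positivity), Lam, Lam]
    rw [abs_sub_comm, abs_of_nonneg]
    apply sub_nonneg.mpr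
    exact Lam_le_Lam hs0 ht1 hst
  rcases le_total s t with h | h
  · exact key s t hs ht h
  · rw [dH, mul_comm, ← dH, key t s ht hs h, abs_sub_comm]

end OrderUnitSpace
end HilbertGeom

namespace HilbertGeom

open OrderUnitSpace

set_option maxHeartbeats 3000000 in
/-- Let `x ≠ y` in `Σ₁` with `x', y'` the endpoints of
`ℓ_{xy} ∩ Σ₁` in the relative boundary (`x` between `x'` and `y`, `y` between `y'`
and `x`), let `f` be an isometry mapping line segments to line segments, and let
`fx', fy'` be the corresponding endpoints of `ℓ_{f(x) f(y)} ∩ Σ₂`. Then there is a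
linear map `S : Span{x', y'} → Span{fx', fy'}` which is bi-positive with respect to
`C₁ ∩ Span{x', y'}` and `C₂ ∩ Span{fx', fy'}`, with `[S x'] = fx'`, `[S y'] = fy'`
and `[S z] = f z` for all `z` in the open segment `(x', y')`. -/
theorem two_dimensional_linear_map_on_span
    {X₁ : Type*} [AddCommGroup X₁] [Module ℝ X₁]
    {X₂ : Type*} [AddCommGroup X₂] [Module ℝ X₂]
    (S₁ : OrderUnitSpace X₁) (S₂ : OrderUnitSpace X₂)
    (φ₁ : X₁ →ₗ[ℝ] ℝ) (φ₂ : X₂ →ₗ[ℝ] ℝ)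
    (hstate₁ : S₁.IsState φ₁) (hpos₁ : S₁.StrictlyPos φ₁)
    (hstate₂ : S₂.IsState φ₂) (hpos₂ : S₂.StrictlyPos φ₂)
    (f : X₁ → X₂) (hmaps : Set.MapsTo f (S₁.Sig φ₁) (S₂.Sig φ₂))
    (hiso : ∀ x ∈ S₁.Sig φ₁, ∀ y ∈ S₁.Sig φ₁, S₂.dH (f x) (f y) = S₁.dH x y)
    (hseg : ∀ x ∈ S₁.Sig φ₁, ∀ y ∈ S₁.Sig φ₁,
      f '' segment ℝ x y = segment ℝ (f x) (f y))
    (x y : X₁) (hx : x ∈ S₁.Sig φ₁) (hy : y ∈ S₁.Sig φ₁) (hxy : x ≠ y)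
    (x' y' : X₁)
    (hx'bd : x' ∈ S₁.relBoundary φ₁) (hy'bd : y' ∈ S₁.relBoundary φ₁)
    (hends : lineThrough x y ∩ S₁.Sig φ₁ = openSegment ℝ x' y')
    (hxbtw : x ∈ openSegment ℝ x' y) (hybtw : y ∈ openSegment ℝ y' x)
    (fx' fy' : X₂)
    (hfx'bd : fx' ∈ S₂.relBoundary φ₂) (hfy'bd : fy' ∈ S₂.relBoundary φ₂)
    (hfends : lineThrough (f x) (f y) ∩ S₂.Sig φ₂ = openSegment ℝ fx' fy')
    (hfxbtw : f x ∈ openSegment ℝ fx' (f y)) (hfybtw : f y ∈ openSegment ℝ fy' (f x)) :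
    ∃ S : ↥(Submodule.span ℝ ({x', y'} : Set X₁)) →ₗ[ℝ] X₂,
      (∀ z : ↥(Submodule.span ℝ ({x', y'} : Set X₁)),
        S z ∈ Submodule.span ℝ ({fx', fy'} : Set X₂)) ∧
      (∀ z : ↥(Submodule.span ℝ ({x', y'} : Set X₁)), S z ∈ S₂.C ↔ (z : X₁) ∈ S₁.C) ∧
      (∀ hx' : x' ∈ Submodule.span ℝ ({x', y'} : Set X₁),
        (φ₂ (S ⟨x', hx'⟩))⁻¹ • S ⟨x', hx'⟩ = fx') ∧
      (∀ hy' : y' ∈ Submodule.span ℝ ({x', y'} : Set X₁),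
        (φ₂ (S ⟨y', hy'⟩))⁻¹ • S ⟨y', hy'⟩ = fy') ∧
      (∀ z : X₁, ∀ hz : z ∈ Submodule.span ℝ ({x', y'} : Set X₁),
        z ∈ openSegment ℝ x' y' → (φ₂ (S ⟨z, hz⟩))⁻¹ • S ⟨z, hz⟩ = f z) := by
  classical
  -- basic memberships
  have hxline : x ∈ lineThrough x y := ⟨0, by simp⟩
  have hyline : y ∈ lineThrough x y := ⟨1, by simp⟩
  have hxseg : x ∈ openSegment ℝ x' y' := by rw [← hends]; exact ⟨hxline, hx⟩
  have hyseg : y ∈ openSegment ℝ x' y' := by rw [← hends]; exact ⟨hyline, hy⟩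
  have hx'y' : x' ≠ y' := by
    rintro rfl
    rw [openSegment_same] at hxseg hyseg
    exact hxy (hxseg.trans hyseg.symm)
  obtain ⟨a₁, s₀, ha₁, hs₀pos, hsum₁, hxeq⟩ := hxseg
  obtain ⟨a₂, t₀, ha₂, ht₀pos, hsum₂, hyeq⟩ := hyseg
  have hs₀Ioo : s₀ ∈ Set.Ioo (0:ℝ) 1 := ⟨hs₀pos, by linarith⟩
  have ht₀Ioo : t₀ ∈ Set.Ioo (0:ℝ) 1 := ⟨ht₀pos, by linarith⟩
  have hxaff : x = aff x' y' s₀ := by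
    rw [aff, show (1:ℝ) - s₀ = a₁ by linarith]; exact hxeq.symm
  have hyaff : y = aff x' y' t₀ := by
    rw [aff, show (1:ℝ) - t₀ = a₂ by linarith]; exact hyeq.symm
  have hs₀t₀ : s₀ ≠ t₀ := fun h => hxy (by rw [hxaff, hyaff, h])
  -- boundary facts, side 1
  have hx'C : x' ∈ S₁.C := S₁.relBoundary_mem_C hx'bd
  have hy'C : y' ∈ S₁.C := S₁.relBoundary_mem_C hy'bd
  have hφx' : φ₁ x' = 1 := S₁.relBoundary_phi hstate₁ hpos₁ hx'bd
  have hφy' : φ₁ y' = 1 := S₁.relBoundary_phi hstate₁ hpos₁ hy'bd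
  have hquad₁ : ∀ α β : ℝ, α • x' + β • y' ∈ S₁.C ↔ 0 ≤ α ∧ 0 ≤ β :=
    S₁.quadrant hstate₁ hpos₁ hx'C hy'C hφx' hφy' hx'bd.2 hy'bd.2 hx.1 hs₀Ioo hxaff
  -- basic memberships, side 2
  have hfx : f x ∈ S₂.Sig φ₂ := hmaps hx
  have hfy : f y ∈ S₂.Sig φ₂ := hmaps hy
  have hfxline : f x ∈ lineThrough (f x) (f y) := ⟨0, by simp⟩
  have hfxseg : f x ∈ openSegment ℝ fx' fy' := by rw [← hfends]; exact ⟨hfxline, hfx⟩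
  have hfx'fy' : fx' ≠ fy' := by
    rintro rfl
    rw [openSegment_same] at hfxseg
    exact hfx'bd.2 (hfxseg ▸ hfx)
  obtain ⟨b₁, ρ₀, hb₁, hρ₀pos, hsum₃, hfxeq⟩ := hfxseg
  have hρ₀Ioo : ρ₀ ∈ Set.Ioo (0:ℝ) 1 := ⟨hρ₀pos, by linarith⟩
  have hfxaff : f x = aff fx' fy' ρ₀ := by
    rw [aff, show (1:ℝ) - ρ₀ = b₁ by linarith]; exact hfxeq.symm
  have hfx'C : fx' ∈ S₂.C := S₂.relBoundary_mem_C hfx'bd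
  have hfy'C : fy' ∈ S₂.C := S₂.relBoundary_mem_C hfy'bd
  have hφfx' : φ₂ fx' = 1 := S₂.relBoundary_phi hstate₂ hpos₂ hfx'bd
  have hφfy' : φ₂ fy' = 1 := S₂.relBoundary_phi hstate₂ hpos₂ hfy'bd
  have hquad₂ : ∀ α β : ℝ, α • fx' + β • fy' ∈ S₂.C ↔ 0 ≤ α ∧ 0 ≤ β :=
    S₂.quadrant hstate₂ hpos₂ hfx'C hfy'C hφfx' hφfy' hfx'bd.2 hfy'bd.2 hfx.1 hρ₀Ioo hfxaff
  -- points of the chords are in the cross sections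
  have hzSig : ∀ s ∈ Set.Ioo (0:ℝ) 1, aff x' y' s ∈ S₁.Sig φ₁ := by
    intro s hs
    have : aff x' y' s ∈ openSegment ℝ x' y' := ⟨1 - s, s, by linarith [hs.2], hs.1, by ring, rfl⟩
    rw [← hends] at this
    exact this.2
  have hwSig : ∀ r ∈ Set.Ioo (0:ℝ) 1, aff fx' fy' r ∈ S₂.Sig φ₂ := by
    intro r hr
    have : aff fx' fy' r ∈ openSegment ℝ fx' fy' :=
      ⟨1 - r, r, by linarith [hr.2], hr.1, by ring, rfl⟩
    rw [← hfends] at this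
    exact this.2
  have hdH₁ : ∀ s t : ℝ, s ∈ Set.Ioo (0:ℝ) 1 → t ∈ Set.Ioo (0:ℝ) 1 →
      S₁.dH (aff x' y' s) (aff x' y' t) = |Lam s - Lam t| :=
    fun s t hs ht => S₁.dH_aff hquad₁ hs ht
  have hdH₂ : ∀ s t : ℝ, s ∈ Set.Ioo (0:ℝ) 1 → t ∈ Set.Ioo (0:ℝ) 1 →
      S₂.dH (aff fx' fy' s) (aff fx' fy' t) = |Lam s - Lam t| :=
    fun s t hs ht => S₂.dH_aff hquad₂ hs ht
  -- distinct chord points have distinct images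
  have hfne : ∀ s t : ℝ, s ∈ Set.Ioo (0:ℝ) 1 → t ∈ Set.Ioo (0:ℝ) 1 → s ≠ t →
      f (aff x' y' s) ≠ f (aff x' y' t) := by
    intro s t hs ht hst heq
    have h1 : S₂.dH (f (aff x' y' s)) (f (aff x' y' t)) = |Lam s - Lam t| := by
      rw [hiso _ (hzSig s hs) _ (hzSig t ht), hdH₁ s t hs ht]
    have hftSig := hmaps (hzSig t ht)
    have hftC : f (aff x' y' t) ∈ S₂.C := S₂.interiorC_subset_C hftSig.1
    have hft0 : f (aff x' y' t) ≠ 0 := by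
      intro h0
      have := hftSig.2
      rw [h0, map_zero] at this
      norm_num at this
    rw [heq, S₂.dH_self hftC hft0] at h1
    have : Lam s ≠ Lam t := by
      rcases lt_or_gt_of_ne hst with h | h
      · exact ne_of_lt (Lam_lt_Lam hs.1 ht.2 h)
      · exact ne_of_gt (Lam_lt_Lam ht.1 hs.2 h)
    exact this (by rwa [eq_comm, abs_eq_zero, sub_eq_zero] at h1)
  -- segment parametrization helper
  have hsegmem : ∀ p q r c : ℝ, 0 ≤ c → c ≤ 1 → r = (1 - c) * p + c * q →
      aff x' y' r ∈ segment ℝ (aff x' y' p) (aff x' y' q) := by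
    intro p q r c hc0 hc1 hr
    exact ⟨1 - c, c, by linarith, hc0, by ring,
      by rw [aff_comb x' y' (by ring : (1 - c) + c = 1), ← hr]⟩
  -- image of the chord lies on the image line
  have hcol : ∀ s ∈ Set.Ioo (0:ℝ) 1, f (aff x' y' s) ∈ openSegment ℝ fx' fy' := by
    intro s hsIoo
    have hzsSig := hzSig s hsIoo
    suffices hline : f (aff x' y' s) ∈ lineThrough (f x) (f y) by
      rw [← hfends]; exact ⟨hline, hmaps hzsSig⟩
    -- wlog-style handling of the position of s relative to s₀ and t₀
    -- first, a helper applicable to any pair p < q of parameters in (0,1) whose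
    -- aff-points are x,y in either order
    have main : ∀ p q : ℝ, p ∈ Set.Ioo (0:ℝ) 1 → q ∈ Set.Ioo (0:ℝ) 1 → p < q →
        f (aff x' y' s) ∈ lineThrough (f (aff x' y' p)) (f (aff x' y' q)) := by
      intro p q hp hq hpq
      rcases lt_trichotomy s p with hsp | hsp | hsp
      · -- zp lies between zs and zq
        have hne1 : q - s ≠ 0 := sub_ne_zero.mpr (by linarith)
        have hc : p = (1 - (p - s) / (q - s)) * s + ((p - s) / (q - s)) * q := by
          field_simp
          ring
        have hmem : aff x' y' p ∈ segment ℝ (aff x' y' s) (aff x' y' q) :=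
          hsegmem s q p _ (div_nonneg (by linarith) (by linarith))
            (by rw [div_le_one (by linarith)]; linarith) hc
        have himg : f (aff x' y' p) ∈ segment ℝ (f (aff x' y' s)) (f (aff x' y' q)) := by
          rw [← hseg _ hzsSig _ (hzSig q hq)]
          exact ⟨aff x' y' p, hmem, rfl⟩
        obtain ⟨a, b, ha, hb, hab, heq⟩ := himg
        have hbne : a ≠ 0 := by
          intro h0
          rw [h0, zero_smul, zero_add, show b = 1 by linarith, one_smul] at heq
          exact hfne p q hp hq (ne_of_lt hpq) heq.symm
        exact solve_line (by linarith : b + a = 1) hbne (by rw [← heq]; abel)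
      · -- s = p
        rw [hsp]
        exact ⟨0, by simp⟩
      · rcases lt_trichotomy s q with hsq | hsq | hsq
        · -- zs between zp and zq
          have hne1 : q - p ≠ 0 := sub_ne_zero.mpr (by linarith)
          have hc : s = (1 - (s - p) / (q - p)) * p + ((s - p) / (q - p)) * q := by
            field_simp
            ring
          have hmem : aff x' y' s ∈ segment ℝ (aff x' y' p) (aff x' y' q) :=
            hsegmem p q s _ (div_nonneg (by linarith) (by linarith))
              (by rw [div_le_one (by linarith)]; linarith) hc
          have himg : f (aff x' y' s) ∈ segment ℝ (f (aff x' y' p)) (f (aff x' y' q)) := by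
            rw [← hseg _ (hzSig p hp) _ (hzSig q hq)]
            exact ⟨aff x' y' s, hmem, rfl⟩
          obtain ⟨a, b, ha, hb, hab, heq⟩ := himg
          rw [← heq]
          exact combo_mem_lineThrough _ _ hab
        · -- s = q
          rw [hsq]
          exact ⟨1, by simp⟩
        · -- zq between zp and zs
          have hne1 : s - p ≠ 0 := sub_ne_zero.mpr (by linarith)
          have hc : q = (1 - (q - p) / (s - p)) * p + ((q - p) / (s - p)) * s := by
            field_simp
            ring
          have hmem : aff x' y' q ∈ segment ℝ (aff x' y' p) (aff x' y' s) :=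
            hsegmem p s q _ (div_nonneg (by linarith) (by linarith))
              (by rw [div_le_one (by linarith)]; linarith) hc
          have himg : f (aff x' y' q) ∈ segment ℝ (f (aff x' y' p)) (f (aff x' y' s)) := by
            rw [← hseg _ (hzSig p hp) _ hzsSig]
            exact ⟨aff x' y' q, hmem, rfl⟩
          obtain ⟨a, b, ha, hb, hab, heq⟩ := himg
          have hbne : b ≠ 0 := by
            intro h0
            rw [h0, zero_smul, add_zero, show a = 1 by linarith, one_smul] at heq
            exact hfne p q hp hq (ne_of_lt hpq) heq
          exact mem_lineThrough_symm (solve_line hab hbne heq.symm)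
    rcases lt_or_gt_of_ne hs₀t₀ with h | h
    · have := main s₀ t₀ hs₀Ioo ht₀Ioo h
      rwa [← hxaff, ← hyaff] at this
    · have := main t₀ s₀ ht₀Ioo hs₀Ioo h
      rw [← hxaff, ← hyaff] at this
      exact mem_lineThrough_symm this
  -- extract the boundary-to-boundary parametrization g
  have hgex : ∀ s : ℝ, s ∈ Set.Ioo (0:ℝ) 1 →
      ∃ r : ℝ, r ∈ Set.Ioo (0:ℝ) 1 ∧ f (aff x' y' s) = aff fx' fy' r := by
    intro s hs
    obtain ⟨a, b, ha, hb, hab, heq⟩ := hcol s hs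
    refine ⟨b, ⟨hb, by linarith⟩, ?_⟩
    rw [← heq, aff, show (1:ℝ) - b = a by linarith]
  obtain ⟨g, hgIoo, hgeq⟩ : ∃ g : ℝ → ℝ, (∀ s ∈ Set.Ioo (0:ℝ) 1, g s ∈ Set.Ioo (0:ℝ) 1) ∧
      (∀ s ∈ Set.Ioo (0:ℝ) 1, f (aff x' y' s) = aff fx' fy' (g s)) := by
    refine ⟨fun s => if h : s ∈ Set.Ioo (0:ℝ) 1 then (hgex s h).choose else 1/2, ?_, ?_⟩
    · intro s hs
      simp only [dif_pos hs]
      exact (hgex s hs).choose_spec.1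
    · intro s hs
      simp only [dif_pos hs]
      exact (hgex s hs).choose_spec.2
  -- g preserves the logit distances
  have htrans : ∀ s ∈ Set.Ioo (0:ℝ) 1, ∀ t ∈ Set.Ioo (0:ℝ) 1,
      |Lam (g s) - Lam (g t)| = |Lam s - Lam t| := by
    intro s hs t ht
    rw [← hdH₂ (g s) (g t) (hgIoo s hs) (hgIoo t ht), ← hgeq s hs, ← hgeq t ht,
      hiso _ (hzSig s hs) _ (hzSig t ht), hdH₁ s t hs ht]
  -- orientation: g s₀ < g t₀ and s₀ < t₀
  have hs₀lt : s₀ < t₀ := by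
    obtain ⟨a, r, ha, hr, har, heq⟩ := hxbtw
    have : x = aff x' y' (r * t₀) := by
      rw [← heq, hyaff, show a • x' = a • aff x' y' 0 by rw [aff_zero],
        aff_comb x' y' har]
      ring_nf
    have := aff_inj hx'y' (hxaff.symm.trans this)
    nlinarith [ht₀pos, hr, ha]
  have hgs₀lt : g s₀ < g t₀ := by
    obtain ⟨a, r, ha, hr, har, heq⟩ := hfxbtw
    have h1 : f x = aff fx' fy' (g s₀) := by rw [hxaff]; exact hgeq s₀ hs₀Ioo
    have h2 : f y = aff fx' fy' (g t₀) := by rw [hyaff]; exact hgeq t₀ ht₀Ioo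
    have h3 : f x = aff fx' fy' (r * g t₀) := by
      rw [← heq, h2, show a • fx' = a • aff fx' fy' 0 by rw [aff_zero],
        aff_comb fx' fy' har]
      ring_nf
    have h4 := aff_inj hfx'fy' (h1.symm.trans h3)
    nlinarith [(hgIoo t₀ ht₀Ioo).1, hr, ha]
  -- the induced map on logit coordinates is a translation
  set μ : ℝ → ℝ := fun p => Lam (g (Linv p)) with hμdef
  have hμ : ∀ p q : ℝ, |μ p - μ q| = |p - q| := by
    intro p q
    have := htrans _ (Linv_mem p) _ (Linv_mem q)
    rw [Lam_Linv, Lam_Linv] at this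
    exact this
  have hμmono : μ (Lam s₀) < μ (Lam t₀) := by
    simp only [hμdef, Linv_Lam hs₀Ioo, Linv_Lam ht₀Ioo]
    exact Lam_lt_Lam (hgIoo s₀ hs₀Ioo).1 (hgIoo t₀ ht₀Ioo).2 hgs₀lt
  have hμtrans := real_isometry hμ (Lam_lt_Lam hs₀Ioo.1 ht₀Ioo.2 hs₀lt) hμmono
  set c : ℝ := μ (Lam s₀) - Lam s₀ with hcdef
  set k : ℝ := Real.exp c with hkdef
  have hk : 0 < k := Real.exp_pos c
  have hLamg : ∀ s ∈ Set.Ioo (0:ℝ) 1, Lam (g s) = Lam s + c := by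
    intro s hs
    have := hμtrans (Lam s)
    rw [hμdef] at this
    simp only at this
    rw [Linv_Lam hs] at this
    exact this
  have hgform : ∀ s ∈ Set.Ioo (0:ℝ) 1, g s * (1 - s) = k * s * (1 - g s) := by
    intro s hs
    have hgs := hgIoo s hs
    have h1 : (0:ℝ) < 1 - s := by linarith [hs.2]
    have h2 : (0:ℝ) < 1 - g s := by linarith [hgs.2]
    have he1 : Real.exp (Lam (g s)) = g s / (1 - g s) :=
      Real.exp_log (div_pos hgs.1 h2)
    have he2 : Real.exp (Lam s + c) = s / (1 - s) * k := by
      rw [Real.exp_add, Lam, Real.exp_log (div_pos hs.1 h1), ← hkdef]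
    have := he1.symm.trans (by rw [hLamg s hs, he2])
    rw [div_eq_iff (ne_of_gt h2)] at this
    field_simp at this
    linarith [this]
  -- linear independence of x', y' and of fx', fy'
  have hindep₁ : ∀ α β : ℝ, α • x' + β • y' = 0 → α = 0 ∧ β = 0 := by
    intro α β h
    have hφ : α + β = 0 := by
      have := congrArg φ₁ h
      simpa [map_add, map_smul, hφx', hφy'] using this
    have : α • (x' - y') = 0 := by
      have e : α • (x' - y') = α • x' + β • y' := by
        rw [smul_sub, show β = -α by linarith]
        module
      rw [e, h]
    rcases smul_eq_zero.mp this with h' | h'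
    · exact ⟨h', by linarith⟩
    · exact absurd (sub_eq_zero.mp h') hx'y'
  -- the linear map on coordinates
  set T : ℝ × ℝ →ₗ[ℝ] X₁ :=
    (LinearMap.toSpanSingleton ℝ X₁ x').coprod (LinearMap.toSpanSingleton ℝ X₁ y') with hTdef
  have hTapp : ∀ p : ℝ × ℝ, T p = p.1 • x' + p.2 • y' := fun p => rfl
  have hTrange : LinearMap.range T = Submodule.span ℝ ({x', y'} : Set X₁) := by
    ext v
    rw [LinearMap.mem_range, Submodule.mem_span_pair]
    constructor
    · rintro ⟨p, hp⟩
      exact ⟨p.1, p.2, by rw [← hTapp]; exact hp⟩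
    · rintro ⟨a, b, hab⟩
      exact ⟨(a, b), by rw [hTapp]; exact hab⟩
  have hTinj : Function.Injective T := by
    intro p q hpq
    have h0 : T (p - q) = 0 := by rw [map_sub, hpq, sub_self]
    rw [hTapp] at h0
    obtain ⟨h1, h2⟩ := hindep₁ _ _ h0
    have e1 : p.1 = q.1 := by simpa [sub_eq_zero] using h1
    have e2 : p.2 = q.2 := by simpa [sub_eq_zero] using h2
    exact Prod.ext e1 e2
  set T₂ : ℝ × ℝ →ₗ[ℝ] X₂ :=
    (LinearMap.toSpanSingleton ℝ X₂ fx').coprod (LinearMap.toSpanSingleton ℝ X₂ (k • fy'))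
    with hT₂def
  have hT₂app : ∀ p : ℝ × ℝ, T₂ p = p.1 • fx' + (p.2 * k) • fy' := by
    intro p
    show p.1 • fx' + p.2 • k • fy' = p.1 • fx' + (p.2 * k) • fy'
    rw [smul_smul]
  set e₁ := LinearEquiv.ofInjective T hTinj with he₁def
  set e₀ := LinearEquiv.ofEq _ _ hTrange.symm with he₀def
  set Smap : ↥(Submodule.span ℝ ({x', y'} : Set X₁)) →ₗ[ℝ] X₂ :=
    T₂ ∘ₗ (e₁.symm.toLinearMap ∘ₗ e₀.toLinearMap) with hSdef
  have hSeval : ∀ (α β : ℝ) (h : α • x' + β • y' ∈ Submodule.span ℝ ({x', y'} : Set X₁)),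
      Smap ⟨α • x' + β • y', h⟩ = α • fx' + (β * k) • fy' := by
    intro α β h
    have hsymm : e₁.symm (e₀ ⟨α • x' + β • y', h⟩) = (α, β) := by
      rw [LinearEquiv.symm_apply_eq]
      apply Subtype.ext
      rw [LinearEquiv.coe_ofEq_apply, LinearEquiv.ofInjective_apply, hTapp]
    have : Smap ⟨α • x' + β • y', h⟩ = T₂ (e₁.symm (e₀ ⟨α • x' + β • y', h⟩)) := rfl
    rw [this, hsymm, hT₂app]
  -- value of φ₂ on images
  have hφval : ∀ α β : ℝ, φ₂ (α • fx' + (β * k) • fy') = α + β * k := by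
    intro α β
    rw [map_add, map_smul, map_smul, hφfx', hφfy', smul_eq_mul, smul_eq_mul]
    ring
  refine ⟨Smap, ?_, ?_, ?_, ?_, ?_⟩
  · -- image in span
    intro z
    obtain ⟨α, β, hαβ⟩ := Submodule.mem_span_pair.mp z.2
    have hz : z = ⟨α • x' + β • y', by rw [hαβ]; exact z.2⟩ := Subtype.ext hαβ.symm
    rw [hz, hSeval]
    exact Submodule.mem_span_pair.mpr ⟨α, β * k, rfl⟩
  · -- bi-positivity
    intro z
    obtain ⟨α, β, hαβ⟩ := Submodule.mem_span_pair.mp z.2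
    have hz : z = ⟨α • x' + β • y', by rw [hαβ]; exact z.2⟩ := Subtype.ext hαβ.symm
    rw [hz, hSeval]
    have hval : ((⟨α • x' + β • y', by rw [hαβ]; exact z.2⟩ :
        ↥(Submodule.span ℝ ({x', y'} : Set X₁))) : X₁) = α • x' + β • y' := rfl
    rw [hval, hquad₂, hquad₁]
    constructor
    · rintro ⟨h1, h2⟩
      refine ⟨h1, ?_⟩
      by_contra hneg
      push_neg at hneg
      nlinarith
    · rintro ⟨h1, h2⟩
      exact ⟨h1, mul_nonneg h2 hk.le⟩
  · -- x' maps to fx'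
    intro hx'mem
    have hz : (⟨x', hx'mem⟩ : ↥(Submodule.span ℝ ({x', y'} : Set X₁)))
        = ⟨(1:ℝ) • x' + (0:ℝ) • y', by simpa using hx'mem⟩ := Subtype.ext (by simp)
    rw [hz, hSeval]
    simp [hφfx']
  · -- y' maps to fy'
    intro hy'mem
    have hz : (⟨y', hy'mem⟩ : ↥(Submodule.span ℝ ({x', y'} : Set X₁)))
        = ⟨(0:ℝ) • x' + (1:ℝ) • y', by simpa using hy'mem⟩ := Subtype.ext (by simp)
    rw [hz, hSeval]
    have e1 : (0:ℝ) • fx' + ((1:ℝ) * k) • fy' = k • fy' := by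
      rw [zero_smul, zero_add, one_mul]
    rw [e1, map_smul, hφfy', smul_eq_mul, mul_one, smul_smul,
      inv_mul_cancel₀ (ne_of_gt hk), one_smul]
  · -- the open segment maps according to f
    intro z hz hzseg
    obtain ⟨a, t, ha, htpos, hat, heq⟩ := hzseg
    have htIoo : t ∈ Set.Ioo (0:ℝ) 1 := ⟨htpos, by linarith⟩
    have hzaff : z = (1 - t) • x' + t • y' := by
      rw [show (1:ℝ) - t = a by linarith]; exact heq.symm
    have hz' : (⟨z, hz⟩ : ↥(Submodule.span ℝ ({x', y'} : Set X₁)))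
        = ⟨(1 - t) • x' + t • y', by rw [← hzaff]; exact hz⟩ := Subtype.ext hzaff
    rw [hz', hSeval, hφval]
    set D : ℝ := 1 - t + t * k with hDdef
    have hD : 0 < D := by
      have : 0 < t * k := mul_pos htpos hk
      have : (0:ℝ) < 1 - t := by linarith [htIoo.2]
      simp only [hDdef]
      linarith [mul_pos htpos hk]
    have hgt := hgIoo t htIoo
    have hgf := hgform t htIoo
    have hc1 : D⁻¹ * (1 - t) = 1 - g t := by
      rw [inv_mul_eq_div, div_eq_iff (ne_of_gt hD), hDdef]
      linear_combination hgf
    have hc2 : D⁻¹ * (t * k) = g t := by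
      rw [inv_mul_eq_div, div_eq_iff (ne_of_gt hD), hDdef]
      linear_combination -hgf
    have hfz : f z = aff fx' fy' (g t) := by
      rw [show z = aff x' y' t by rw [hzaff]; rfl]
      exact hgeq t htIoo
    rw [hfz, aff, ← hc1, ← hc2, smul_add, smul_smul, smul_smul]

end HilbertGeom
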